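/- Let P₀ be a finite poset with elements x₁,…,x_{m₀}, and let S ⊆ |P₀| be a subset that is not a chain in P₀ (i.e. S contains two incomparable elements). Then for every choice of fixed nonnegative values mᵢ for the i with xᵢ ∉ S, the function of the remaining variables (mᵢ for xᵢ ∈ S) given by L₊(P₀; m₁,…,m_{m₀}) is not a polynomial function; indeed there is no polynomial in card(S) variables agreeing with it at all tuples of nonnegative integers. -/

import Mathlib

open scoped Classical

/-- Underlying set of the lexicographic sum over `Fin m₀` of chains `C i` of `m i` elements. -/
abbrev LexSumChains (m₀ : ℕ) (m : Fin m₀ → ℕ) : Type := Σ i : Fin m₀, Fin (m i)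

/-- The order of the lexicographic sum `P₀ * (C₁, …, C_{m₀})` of chains over the poset
`(Fin m₀, r0)`: within a chain elements keep their order, and an element of `C i` is below an
element of `C i'` (for `i ≠ i'`) iff `xᵢ ≺₀ x_{i'}`. -/
def lexRel {m₀ : ℕ} (r0 : Fin m₀ → Fin m₀ → Prop) (m : Fin m₀ → ℕ)
    (x y : LexSumChains m₀ m) : Prop :=
  (x.1 = y.1 ∧ (x.2 : ℕ) ≤ (y.2 : ℕ)) ∨ (x.1 ≠ y.1 ∧ r0 x.1 y.1)

/-- `φ` is (the isotone bijection corresponding to) a linearization of the lexicographic sum. -/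
def IsLin {m₀ : ℕ} (r0 : Fin m₀ → Fin m₀ → Prop) (m : Fin m₀ → ℕ)
    (φ : LexSumChains m₀ m ≃ Fin (∑ i, m i)) : Prop :=
  ∀ x y, lexRel r0 m x y → φ x ≤ φ y

/-- `b` is the reference ordering, listing the elements `x_{i,j}` in lexicographic order
of the pairs `(i,j)`. -/
def IsRef {m₀ : ℕ} (m : Fin m₀ → ℕ) (b : LexSumChains m₀ m ≃ Fin (∑ i, m i)) : Prop :=
  ∀ x y : LexSumChains m₀ m,
    (x.1 < y.1 ∨ (x.1 = y.1 ∧ (x.2 : ℕ) ≤ (y.2 : ℕ))) → b x ≤ b y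

/-- `L₊(P₀; m₁, …, m_{m₀})`, the number of linearizations of the lexicographic sum of chains. -/
noncomputable def Lplus (m₀ : ℕ) (r0 : Fin m₀ → Fin m₀ → Prop) (m : Fin m₀ → ℕ) : ℕ :=
  Nat.card {φ : LexSumChains m₀ m ≃ Fin (∑ i, m i) // IsLin r0 m φ}

/-- `L₋(P₀; m₁, …, m_{m₀})`, the sign-imbalance (number of even minus number of odd
linearizations) relative to the reference ordering `b`. -/
noncomputable def Lminus (m₀ : ℕ) (r0 : Fin m₀ → Fin m₀ → Prop) (m : Fin m₀ → ℕ)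
    (b : LexSumChains m₀ m ≃ Fin (∑ i, m i)) : ℤ :=
  ∑ φ : LexSumChains m₀ m ≃ Fin (∑ i, m i),
    if IsLin r0 m φ then ((Equiv.Perm.sign (b.symm.trans φ)) : ℤ) else 0

namespace NotChainAux
open Finset



variable {m₀ : ℕ}

/-- rank of `z` within finset `B` wrt relation `L`. -/
noncomputable def rkn (L : Fin m₀ → Fin m₀ → Prop) (B : Finset (Fin m₀)) (z : Fin m₀) : ℕ :=
  (B.filter (fun w => L w z ∧ w ≠ z)).card

lemma rkn_lt_rkn {L : Fin m₀ → Fin m₀ → Prop} (hL : IsLinearOrder (Fin m₀) L)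
    {B : Finset (Fin m₀)} {y z : Fin m₀} (hy : y ∈ B) (hyz : y ≠ z) (h : L y z) :
    rkn L B y < rkn L B z := by
  haveI := hL
  have hsub : B.filter (fun w => L w y ∧ w ≠ y) ⊆ B.filter (fun w => L w z ∧ w ≠ z) := by
    intro w hw
    simp only [mem_filter] at hw ⊢
    refine ⟨hw.1, _root_.trans_of L hw.2.1 h, ?_⟩
    rintro rfl
    exact hyz (antisymm_of L h hw.2.1)
  refine Finset.card_lt_card ((Finset.ssubset_iff_of_subset hsub).2 ⟨y, ?_, ?_⟩)
  · simp [mem_filter, hy, h, hyz]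
  · simp

lemma rkn_lt_card {L : Fin m₀ → Fin m₀ → Prop} {B : Finset (Fin m₀)} {z : Fin m₀}
    (hz : z ∈ B) : rkn L B z < B.card := by
  refine Finset.card_lt_card (Finset.filter_ssubset.2 ⟨z, hz, ?_⟩)
  simp

theorem sig_spec {r0 : Fin m₀ → Fin m₀ → Prop} {i j : Fin m₀}
    (hr0 : IsPartialOrder (Fin m₀) r0) (hij : i ≠ j) (h1 : ¬ r0 i j) (h2 : ¬ r0 j i) :
    ∃ σ : Fin m₀ → ℕ, Function.Injective σ ∧ (∀ a b, a ≠ b → r0 a b → σ a < σ b) ∧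
      σ j = σ i + 1 := by
  haveI := hr0
  obtain ⟨L, hL, hrL⟩ := extend_partialOrder r0
  haveI := hL
  set As : Finset (Fin m₀) := univ.filter fun z => (r0 z i ∨ r0 z j) ∧ z ≠ i ∧ z ≠ j with hAs
  set R : Finset (Fin m₀) := univ.filter fun z => ¬(r0 z i ∨ r0 z j) with hR
  set σ : Fin m₀ → ℕ := fun z =>
    if z ∈ As then rkn L As z
    else if z = i then As.card
    else if z = j then As.card + 1
    else As.card + 2 + rkn L R z with hσ
  have hiA : i ∉ As := by simp [hAs]
  have hjA : j ∉ As := by simp [hAs]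
  have vi : σ i = As.card := by simp [hσ, hiA]
  have vj : σ j = As.card + 1 := by simp [hσ, hjA, Ne.symm hij]
  have tri : ∀ z, z ∈ As ∨ z = i ∨ z = j ∨ z ∈ R := by
    intro z
    by_cases hzi : z = i
    · exact Or.inr (Or.inl hzi)
    by_cases hzj : z = j
    · exact Or.inr (Or.inr (Or.inl hzj))
    by_cases hz : r0 z i ∨ r0 z j
    · exact Or.inl (by simp [hAs, hz, hzi, hzj])
    · refine Or.inr (Or.inr (Or.inr ?_))
      simp only [hR, mem_filter, mem_univ, true_and, not_or]
      exact not_or.1 hz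
  have hAval : ∀ z ∈ As, σ z = rkn L As z := by
    intro z hz; simp [hσ, hz]
  have hRmem : ∀ z ∈ R, z ∉ As ∧ z ≠ i ∧ z ≠ j := by
    intro z hz
    simp only [hR, mem_filter, mem_univ, true_and] at hz
    refine ⟨by simp [hAs, hz], ?_, ?_⟩
    · rintro rfl; exact hz (Or.inl (refl_of r0 _))
    · rintro rfl; exact hz (Or.inr (refl_of r0 _))
  have hRval : ∀ z ∈ R, σ z = As.card + 2 + rkn L R z := by
    intro z hz
    obtain ⟨h1', h2', h3'⟩ := hRmem z hz
    simp [hσ, h1', h2', h3']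
  -- monotone
  have mono : ∀ a b, a ≠ b → r0 a b → σ a < σ b := by
    intro a b hab hr
    rcases tri a with ha | rfl | rfl | ha
    · -- a ∈ As
      rcases tri b with hb | rfl | rfl | hb
      · rw [hAval a ha, hAval b hb]
        exact rkn_lt_rkn hL ha hab (hrL _ _ hr)
      · rw [hAval a ha, vi]; exact rkn_lt_card ha
      · rw [hAval a ha, vj]; exact lt_trans (rkn_lt_card ha) (Nat.lt_succ_self _)
      · rw [hAval a ha, hRval b hb]
        have := rkn_lt_card (L := L) ha; omega
    · -- a = i
      rcases tri b with hb | rfl | rfl | hb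
      · exfalso
        simp only [hAs, mem_filter, mem_univ, true_and] at hb
        rcases hb.1 with hbi | hbj
        · exact hb.2.1 (antisymm_of r0 hbi hr)
        · exact h1 (trans_of r0 hr hbj)
      · exact absurd rfl hab
      · exact absurd hr h1
      · rw [vi, hRval b hb]; omega
    · -- a = j
      rcases tri b with hb | rfl | rfl | hb
      · exfalso
        simp only [hAs, mem_filter, mem_univ, true_and] at hb
        rcases hb.1 with hbi | hbj
        · exact h2 (trans_of r0 hr hbi)
        · exact hb.2.2 (antisymm_of r0 hbj hr)
      · exact absurd hr h2
      · exact absurd rfl hab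
      · rw [vj, hRval b hb]; omega
    · -- a ∈ R
      have haR : ¬(r0 a i ∨ r0 a j) := by
        simpa [hR, mem_filter] using ha
      rcases tri b with hb | rfl | rfl | hb
      · exfalso
        simp only [hAs, mem_filter, mem_univ, true_and] at hb
        rcases hb.1 with hbi | hbj
        · exact haR (Or.inl (trans_of r0 hr hbi))
        · exact haR (Or.inr (trans_of r0 hr hbj))
      · exact absurd hr (fun h => haR (Or.inl h))
      · exact absurd hr (fun h => haR (Or.inr h))
      · rw [hRval a ha, hRval b hb]
        have := rkn_lt_rkn hL ha hab (hrL _ _ hr)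
        omega
  -- injective
  have inj : Function.Injective σ := by
    intro a b hab
    by_contra hne
    have hAlt : ∀ z ∈ As, σ z < As.card := by
      intro z hz; rw [hAval z hz]; exact rkn_lt_card hz
    rcases tri a with ha | rfl | rfl | ha <;> rcases tri b with hb | rfl | rfl | hb
    · rcases total_of L a b with hl | hl
      · have := rkn_lt_rkn hL ha hne hl
        rw [hAval a ha, hAval b hb] at hab; omega
      · have := rkn_lt_rkn hL hb (Ne.symm hne) hl
        rw [hAval a ha, hAval b hb] at hab; omega
    · have := hAlt a ha; rw [vi] at hab; omega
    · have := hAlt a ha; rw [vj] at hab; omega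
    · have := hAlt a ha; rw [hRval b hb] at hab; omega
    · have := hAlt b hb; rw [vi] at hab; omega
    · exact hne rfl
    · rw [vi, vj] at hab; omega
    · rw [vi, hRval b hb] at hab; omega
    · have := hAlt b hb; rw [vj] at hab; omega
    · rw [vj, vi] at hab; omega
    · exact hne rfl
    · rw [vj, hRval b hb] at hab; omega
    · have := hAlt b hb; rw [hRval a ha] at hab; omega
    · rw [hRval a ha, vi] at hab; omega
    · rw [hRval a ha, vj] at hab; omega
    · rcases total_of L a b with hl | hl
      · have := rkn_lt_rkn hL ha hne hl
        rw [hRval a ha, hRval b hb] at hab; omega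
      · have := rkn_lt_rkn hL hb (Ne.symm hne) hl
        rw [hRval a ha, hRval b hb] at hab; omega
  exact ⟨σ, inj, mono, by rw [vi, vj]⟩



section Build

variable {m₀ n : ℕ} {m : Fin m₀ → ℕ} (σ : Fin m₀ → ℕ) (i j : Fin m₀)
  (hmi : m i = n) (hmj : m j = n)
  (A : Finset (Fin (2*n))) (hA : A.card = n) (hAc : Aᶜ.card = n)

/-- key function into `ℕ ×ₗ ℕ` representing the shuffle `A`. -/
noncomputable def keyF (x : LexSumChains m₀ m) : ℕ ×ₗ ℕ :=
  if h : x.1 = i then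
    toLex (σ i, ((A.orderEmbOfFin hA ⟨(x.2 : ℕ), by rw [← hmi, ← h]; exact x.2.isLt⟩ :
      Fin (2*n)) : ℕ))
  else if h' : x.1 = j then
    toLex (σ i, ((Aᶜ.orderEmbOfFin hAc ⟨(x.2 : ℕ), by rw [← hmj, ← h']; exact x.2.isLt⟩ :
      Fin (2*n)) : ℕ))
  else toLex (σ x.1, (x.2 : ℕ))

variable {σ i j A}

lemma keyF_at_i {t : Fin m₀} (ht : t = i) (s : Fin (m t)) :
    keyF σ i j hmi hmj A hA hAc ⟨t, s⟩ =
      toLex (σ i, ((A.orderEmbOfFin hA ⟨(s : ℕ), by rw [← hmi, ← ht]; exact s.isLt⟩ :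
        Fin (2*n)) : ℕ)) := by
  unfold keyF
  rw [dif_pos ht]

lemma keyF_at_j (hij : i ≠ j) {t : Fin m₀} (ht : t = j) (s : Fin (m t)) :
    keyF σ i j hmi hmj A hA hAc ⟨t, s⟩ =
      toLex (σ i, ((Aᶜ.orderEmbOfFin hAc ⟨(s : ℕ), by rw [← hmj, ← ht]; exact s.isLt⟩ :
        Fin (2*n)) : ℕ)) := by
  unfold keyF
  rw [dif_neg (show (⟨t, s⟩ : LexSumChains m₀ m).1 ≠ i by
      show t ≠ i; rw [ht]; exact Ne.symm hij), dif_pos ht]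

lemma keyF_at_other {t : Fin m₀} (hti : t ≠ i) (htj : t ≠ j) (s : Fin (m t)) :
    keyF σ i j hmi hmj A hA hAc ⟨t, s⟩ = toLex (σ t, (s : ℕ)) := by
  unfold keyF
  rw [dif_neg (show (⟨t, s⟩ : LexSumChains m₀ m).1 ≠ i from hti),
    dif_neg (show (⟨t, s⟩ : LexSumChains m₀ m).1 ≠ j from htj)]

lemma sigma_ext {t u : Fin m₀} {s : Fin (m t)} {v : Fin (m u)} (h : t = u)
    (h2 : (s : ℕ) = (v : ℕ)) : (⟨t, s⟩ : LexSumChains m₀ m) = ⟨u, v⟩ := by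
  subst h
  exact congrArg _ (Fin.val_injective h2)

lemma keyF_fst (hij : i ≠ j) (x : LexSumChains m₀ m) :
    (ofLex (keyF σ i j hmi hmj A hA hAc x)).1 = if x.1 = j then σ i else σ x.1 := by
  obtain ⟨t, s⟩ := x
  dsimp only
  by_cases h : t = i
  · rw [keyF_at_i hmi hmj hA hAc h, ofLex_toLex,
      if_neg (show t ≠ j by rw [h]; exact hij)]
    show σ i = σ t
    rw [h]
  by_cases h' : t = j
  · rw [keyF_at_j hmi hmj hA hAc hij h', ofLex_toLex, if_pos h']
  · rw [keyF_at_other hmi hmj hA hAc h h', ofLex_toLex, if_neg h']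

lemma keyF_mono (hij : i ≠ j) (r0 : Fin m₀ → Fin m₀ → Prop)
    (h1 : ¬ r0 i j) (h2 : ¬ r0 j i)
    (hσinj : Function.Injective σ) (hσmono : ∀ a b, a ≠ b → r0 a b → σ a < σ b)
    (hσj : σ j = σ i + 1)
    {x y : LexSumChains m₀ m} (hxy : lexRel r0 m x y) :
    keyF σ i j hmi hmj A hA hAc x ≤ keyF σ i j hmi hmj A hA hAc y := by
  rcases hxy with ⟨hh, hle⟩ | ⟨hne, hr⟩
  · -- same chain
    obtain ⟨t, s⟩ := x
    obtain ⟨u, v⟩ := y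
    dsimp at hh
    subst hh
    dsimp at hle
    by_cases h : t = i
    · rw [keyF_at_i hmi hmj hA hAc h, keyF_at_i hmi hmj hA hAc h, Prod.Lex.le_iff]
      right
      exact ⟨rfl, (A.orderEmbOfFin hA).le_iff_le.2 (Fin.mk_le_mk.2 hle)⟩
    by_cases h' : t = j
    · rw [keyF_at_j hmi hmj hA hAc hij h', keyF_at_j hmi hmj hA hAc hij h', Prod.Lex.le_iff]
      right
      exact ⟨rfl, (Aᶜ.orderEmbOfFin hAc).le_iff_le.2 (Fin.mk_le_mk.2 hle)⟩
    · rw [keyF_at_other hmi hmj hA hAc h h', keyF_at_other hmi hmj hA hAc h h',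
        Prod.Lex.le_iff]
      right
      exact ⟨rfl, hle⟩
  · -- different chains
    have hfu : (if x.1 = j then σ i else σ x.1) < (if y.1 = j then σ i else σ y.1) := by
      by_cases htj : x.1 = j
      · rw [if_pos htj]
        have hyj : y.1 ≠ j := fun h => hne (htj.trans h.symm)
        rw [if_neg hyj]
        have := hσmono x.1 y.1 hne hr
        rw [htj, hσj] at this
        omega
      · rw [if_neg htj]
        by_cases huj : y.1 = j
        · rw [if_pos huj]
          have hxi : x.1 ≠ i := by
            rintro hxi
            exact h1 (by rw [← hxi, ← huj]; exact hr)
          have hlt := hσmono x.1 y.1 hne hr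
          rw [huj, hσj] at hlt
          have : σ x.1 ≠ σ i := fun hh => hxi (hσinj hh)
          omega
        · rw [if_neg huj]
          exact hσmono x.1 y.1 hne hr
    rw [← keyF_fst hmi hmj hA hAc hij x, ← keyF_fst hmi hmj hA hAc hij y] at hfu
    exact Prod.Lex.le_iff.2 (Or.inl hfu)

lemma notmem_compl_val (p q : Fin n) :
    ((A.orderEmbOfFin hA p : Fin (2*n)) : ℕ) ≠ ((Aᶜ.orderEmbOfFin hAc q : Fin (2*n)) : ℕ) := by
  intro hpq
  have hm1 := A.orderEmbOfFin_mem hA p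
  have hm2 := Aᶜ.orderEmbOfFin_mem hAc q
  rw [Fin.val_injective hpq] at hm1
  exact (Finset.mem_compl.1 hm2) hm1

lemma keyF_inj (hij : i ≠ j) (hσinj : Function.Injective σ) :
    Function.Injective (keyF σ i j hmi hmj A hA hAc) := by
  have embA : ∀ p q : Fin n, ((A.orderEmbOfFin hA p : Fin (2*n)) : ℕ) =
      ((A.orderEmbOfFin hA q : Fin (2*n)) : ℕ) → p = q := fun p q h =>
    (A.orderEmbOfFin hA).injective (Fin.val_injective h)
  have embAc : ∀ p q : Fin n, ((Aᶜ.orderEmbOfFin hAc p : Fin (2*n)) : ℕ) =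
      ((Aᶜ.orderEmbOfFin hAc q : Fin (2*n)) : ℕ) → p = q := fun p q h =>
    (Aᶜ.orderEmbOfFin hAc).injective (Fin.val_injective h)
  intro x y h
  obtain ⟨t, s⟩ := x
  obtain ⟨u, v⟩ := y
  by_cases ht : t = i
  · rw [keyF_at_i hmi hmj hA hAc ht] at h
    by_cases hu : u = i
    · rw [keyF_at_i hmi hmj hA hAc hu, toLex_inj, Prod.mk.injEq] at h
      exact sigma_ext (ht.trans hu.symm) (congrArg Fin.val (embA _ _ h.2))
    by_cases hu' : u = j
    · rw [keyF_at_j hmi hmj hA hAc hij hu', toLex_inj, Prod.mk.injEq] at h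
      exact absurd h.2 (notmem_compl_val hA hAc _ _)
    · rw [keyF_at_other hmi hmj hA hAc hu hu', toLex_inj, Prod.mk.injEq] at h
      exact absurd (hσinj h.1).symm hu
  by_cases ht' : t = j
  · rw [keyF_at_j hmi hmj hA hAc hij ht'] at h
    by_cases hu : u = i
    · rw [keyF_at_i hmi hmj hA hAc hu, toLex_inj, Prod.mk.injEq] at h
      exact absurd h.2.symm (notmem_compl_val hA hAc _ _)
    by_cases hu' : u = j
    · rw [keyF_at_j hmi hmj hA hAc hij hu', toLex_inj, Prod.mk.injEq] at h
      exact sigma_ext (ht'.trans hu'.symm) (congrArg Fin.val (embAc _ _ h.2))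
    · rw [keyF_at_other hmi hmj hA hAc hu hu', toLex_inj, Prod.mk.injEq] at h
      exact absurd (hσinj h.1).symm hu
  · rw [keyF_at_other hmi hmj hA hAc ht ht'] at h
    by_cases hu : u = i
    · rw [keyF_at_i hmi hmj hA hAc hu, toLex_inj, Prod.mk.injEq] at h
      exact absurd (hσinj h.1) ht
    by_cases hu' : u = j
    · rw [keyF_at_j hmi hmj hA hAc hij hu', toLex_inj, Prod.mk.injEq] at h
      exact absurd (hσinj h.1) ht
    · rw [keyF_at_other hmi hmj hA hAc hu hu', toLex_inj, Prod.mk.injEq] at h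
      exact sigma_ext (hσinj h.1) h.2

lemma keyF_compare (hij : i ≠ j) (s s' : Fin n) :
    keyF σ i j hmi hmj A hA hAc ⟨j, ⟨(s' : ℕ), by rw [hmj]; exact s'.isLt⟩⟩ <
      keyF σ i j hmi hmj A hA hAc ⟨i, ⟨(s : ℕ), by rw [hmi]; exact s.isLt⟩⟩ ↔
    ((Aᶜ.orderEmbOfFin hAc s' : Fin (2*n)) : ℕ) <
      ((A.orderEmbOfFin hA s : Fin (2*n)) : ℕ) := by
  rw [keyF_at_i hmi hmj hA hAc rfl, keyF_at_j hmi hmj hA hAc hij rfl, Prod.Lex.lt_iff]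
  constructor
  · rintro (hlt | ⟨-, hlt⟩)
    · exact absurd hlt (lt_irrefl _)
    · convert hlt using 3 <;> rfl
  · intro hlt
    right
    refine ⟨rfl, ?_⟩
    convert hlt using 3 <;> rfl

lemma count_lemma {n : ℕ} (A : Finset (Fin (2*n))) (hA : A.card = n) (hAc : Aᶜ.card = n)
    (s : Fin n) :
    ((A.orderEmbOfFin hA s : Fin (2*n)) : ℕ) =
      (s : ℕ) + (univ.filter fun s' : Fin n =>
        ((Aᶜ.orderEmbOfFin hAc s' : Fin (2*n)) : ℕ) <
          ((A.orderEmbOfFin hA s : Fin (2*n)) : ℕ)).card := by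
  classical
  set a : Fin n ↪o Fin (2*n) := A.orderEmbOfFin hA with ha
  set b : Fin n ↪o Fin (2*n) := Aᶜ.orderEmbOfFin hAc with hb
  have h0 : (Iio (a s)).card = ((a s : Fin (2*n)) : ℕ) := Fin.card_Iio _
  have hsplit := Finset.card_filter_add_card_filter_not
    (s := Iio (a s)) (p := fun y => y ∈ A)
  have h1 : ((Iio (a s)).filter (fun y => y ∈ A)).card = (s : ℕ) := by
    have himg : (Iio (a s)).filter (fun y => y ∈ A) = (Iio s).image a := by
      ext y
      simp only [Finset.mem_filter, Finset.mem_Iio, Finset.mem_image]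
      constructor
      · rintro ⟨hlt, hyA⟩
        have : y ∈ Set.range a := by
          rw [ha, Finset.range_orderEmbOfFin]
          exact hyA
        obtain ⟨t, rfl⟩ := this
        exact ⟨t, a.lt_iff_lt.1 hlt, rfl⟩
      · rintro ⟨t, hts, rfl⟩
        exact ⟨a.lt_iff_lt.2 hts, by rw [ha]; exact A.orderEmbOfFin_mem hA t⟩
    rw [himg, Finset.card_image_of_injective _ a.injective, Fin.card_Iio]
  have h2 : ((Iio (a s)).filter (fun y => ¬ y ∈ A)).card =
      (univ.filter fun s' : Fin n =>
        ((b s' : Fin (2*n)) : ℕ) < ((a s : Fin (2*n)) : ℕ)).card := by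
    have himg : (Iio (a s)).filter (fun y => ¬ y ∈ A) =
        (univ.filter fun s' : Fin n =>
          ((b s' : Fin (2*n)) : ℕ) < ((a s : Fin (2*n)) : ℕ)).image b := by
      ext y
      simp only [Finset.mem_filter, Finset.mem_Iio, Finset.mem_image, Finset.mem_univ,
        true_and]
      constructor
      · rintro ⟨hlt, hyA⟩
        have : y ∈ Set.range b := by
          rw [hb, Finset.range_orderEmbOfFin]
          exact Finset.mem_compl.2 hyA
        obtain ⟨t, rfl⟩ := this
        exact ⟨t, hlt, rfl⟩
      · rintro ⟨t, hts, rfl⟩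
        refine ⟨hts, ?_⟩
        have := Aᶜ.orderEmbOfFin_mem hAc t
        rw [← hb] at this
        exact Finset.mem_compl.1 this
    rw [himg, Finset.card_image_of_injective _ b.injective]
  omega

variable (σ) (i) (j)

noncomputable def theT : Finset (ℕ ×ₗ ℕ) :=
  Finset.image (keyF σ i j hmi hmj A hA hAc) Finset.univ

lemma theT_card (hij : i ≠ j) (hσinj : Function.Injective σ) :
    (theT σ i j hmi hmj hA hAc).card = ∑ t, m t := by
  rw [theT, Finset.card_image_of_injective _ (keyF_inj hmi hmj hA hAc hij hσinj),
    Finset.card_univ]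
  simp

noncomputable def mkPhi (hij : i ≠ j) (hσinj : Function.Injective σ) :
    LexSumChains m₀ m ≃ Fin (∑ t, m t) :=
  Equiv.ofBijective
    (fun x => ((theT σ i j hmi hmj hA hAc).orderIsoOfFin (theT_card σ i j hmi hmj hA hAc hij hσinj)).symm
      ⟨keyF σ i j hmi hmj A hA hAc x, Finset.mem_image_of_mem _ (Finset.mem_univ x)⟩)
    (by
      refine (Fintype.bijective_iff_injective_and_card _).2 ⟨?_, by simp⟩
      intro x y hxy
      have := ((theT σ i j hmi hmj hA hAc).orderIsoOfFin
        (theT_card σ i j hmi hmj hA hAc hij hσinj)).symm.injective hxy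
      exact keyF_inj hmi hmj hA hAc hij hσinj (congrArg Subtype.val this))

lemma mkPhi_le_iff (hij : i ≠ j) (hσinj : Function.Injective σ) (x y : LexSumChains m₀ m) :
    mkPhi σ i j hmi hmj hA hAc hij hσinj x ≤ mkPhi σ i j hmi hmj hA hAc hij hσinj y ↔
      keyF σ i j hmi hmj A hA hAc x ≤ keyF σ i j hmi hmj A hA hAc y := by
  show ((theT σ i j hmi hmj hA hAc).orderIsoOfFin (theT_card σ i j hmi hmj hA hAc hij hσinj)).symm _ ≤
    ((theT σ i j hmi hmj hA hAc).orderIsoOfFin (theT_card σ i j hmi hmj hA hAc hij hσinj)).symm _ ↔ _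
  rw [OrderIso.le_iff_le]
  exact Subtype.mk_le_mk

lemma mkPhi_lt_iff (hij : i ≠ j) (hσinj : Function.Injective σ) (x y : LexSumChains m₀ m) :
    mkPhi σ i j hmi hmj hA hAc hij hσinj x < mkPhi σ i j hmi hmj hA hAc hij hσinj y ↔
      keyF σ i j hmi hmj A hA hAc x < keyF σ i j hmi hmj A hA hAc y := by
  show ((theT σ i j hmi hmj hA hAc).orderIsoOfFin (theT_card σ i j hmi hmj hA hAc hij hσinj)).symm _ <
    ((theT σ i j hmi hmj hA hAc).orderIsoOfFin (theT_card σ i j hmi hmj hA hAc hij hσinj)).symm _ ↔ _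
  rw [OrderIso.lt_iff_lt]
  exact Subtype.mk_lt_mk

lemma mkPhi_isLin (hij : i ≠ j) (r0 : Fin m₀ → Fin m₀ → Prop)
    (h1 : ¬ r0 i j) (h2 : ¬ r0 j i)
    (hσinj : Function.Injective σ) (hσmono : ∀ a b, a ≠ b → r0 a b → σ a < σ b)
    (hσj : σ j = σ i + 1) :
    IsLin r0 m (mkPhi σ i j hmi hmj hA hAc hij hσinj) := fun _ _ hxy =>
  (mkPhi_le_iff σ i j hmi hmj hA hAc hij hσinj _ _).2
    (keyF_mono hmi hmj hA hAc hij r0 h1 h2 hσinj hσmono hσj hxy)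

end Build

theorem choose_le_Lplus {m₀ : ℕ} {r0 : Fin m₀ → Fin m₀ → Prop}
    (hr0 : IsPartialOrder (Fin m₀) r0)
    {i j : Fin m₀} (hij : i ≠ j) (h1 : ¬ r0 i j) (h2 : ¬ r0 j i) (m : Fin m₀ → ℕ) (n : ℕ)
    (hmi : m i = n) (hmj : m j = n) :
    (2*n).choose n ≤ Lplus m₀ r0 m := by
  classical
  obtain ⟨σ, hσinj, hσmono, hσj⟩ := sig_spec hr0 hij h1 h2
  have hAc : ∀ A : Finset (Fin (2*n)), A.card = n → Aᶜ.card = n := by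
    intro A hA
    rw [Finset.card_compl, Fintype.card_fin]
    omega
  set F : {A : Finset (Fin (2*n)) // A.card = n} →
      {φ : LexSumChains m₀ m ≃ Fin (∑ t, m t) // IsLin r0 m φ} :=
    fun A => ⟨mkPhi σ i j hmi hmj A.2 (hAc A.1 A.2) hij hσinj,
      mkPhi_isLin σ i j hmi hmj A.2 (hAc A.1 A.2) hij r0 h1 h2 hσinj hσmono hσj⟩ with hF
  have Finj : Function.Injective F := by
    intro A B hFAB
    have hphi : mkPhi σ i j hmi hmj A.2 (hAc A.1 A.2) hij hσinj =
        mkPhi σ i j hmi hmj B.2 (hAc B.1 B.2) hij hσinj := congrArg Subtype.val hFAB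
    have haab : ∀ s : Fin n, ((A.1.orderEmbOfFin A.2 s : Fin (2*n)) : ℕ) =
        ((B.1.orderEmbOfFin B.2 s : Fin (2*n)) : ℕ) := by
      intro s
      rw [count_lemma A.1 A.2 (hAc _ A.2) s, count_lemma B.1 B.2 (hAc _ B.2) s]
      congr 1
      refine congrArg Finset.card (Finset.filter_congr ?_)
      intro s' _
      rw [← keyF_compare hmi hmj A.2 (hAc _ A.2) hij s s',
        ← keyF_compare hmi hmj B.2 (hAc _ B.2) hij s s',
        ← mkPhi_lt_iff σ i j hmi hmj A.2 (hAc _ A.2) hij hσinj,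
        ← mkPhi_lt_iff σ i j hmi hmj B.2 (hAc _ B.2) hij hσinj, hphi]
    have hfun : ((A.1.orderEmbOfFin A.2 : Fin n ↪o Fin (2*n)) : Fin n → Fin (2*n)) =
        ((B.1.orderEmbOfFin B.2 : Fin n ↪o Fin (2*n)) : Fin n → Fin (2*n)) :=
      funext fun s => Fin.val_injective (haab s)
    apply Subtype.ext
    apply Finset.coe_injective
    rw [← Finset.range_orderEmbOfFin A.1 A.2, ← Finset.range_orderEmbOfFin B.1 B.2, hfun]
  calc (2*n).choose n = Fintype.card {A : Finset (Fin (2*n)) // A.card = n} := by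
        rw [Fintype.card_finset_len, Fintype.card_fin]
    _ ≤ Fintype.card {φ : LexSumChains m₀ m ≃ Fin (∑ t, m t) // IsLin r0 m φ} :=
        Fintype.card_le_of_injective F Finj
    _ = Lplus m₀ r0 m := by rw [Lplus, Nat.card_eq_fintype_card]

lemma two_pow_le_choose {n : ℕ} (hn : 4 ≤ n) : 2^n ≤ (2*n).choose n := by
  have h := Nat.four_pow_lt_mul_centralBinom n hn
  have hn2 : n < 2^n := Nat.lt_two_pow_self
  have h4 : (4:ℕ)^n = 2^n * 2^n := by rw [← mul_pow]; norm_num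
  have hlt : 2^n * 2^n < 2^n * Nat.centralBinom n := by
    calc 2^n * 2^n = 4^n := h4.symm
      _ < n * Nat.centralBinom n := h
      _ ≤ 2^n * Nat.centralBinom n := Nat.mul_le_mul_right _ hn2.le
  have := Nat.lt_of_mul_lt_mul_left hlt
  have hc : Nat.centralBinom n = (2*n).choose n := rfl
  omega

lemma eval_aeval {ι : Type*} (g : ι → Polynomial ℚ) (x : ℚ) (f : MvPolynomial ι ℚ) :
    (MvPolynomial.aeval g f).eval x = MvPolynomial.eval (fun t => (g t).eval x) f := by
  induction f using MvPolynomial.induction_on with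
  | C a => simp
  | add f g hf hg => simp [hf, hg]
  | mul_X f t hf => simp [hf]

lemma no_poly (p : Polynomial ℚ) (hp : ∀ n : ℕ, 4 ≤ n → (2:ℚ)^n ≤ p.eval (n:ℚ)) : False := by
  have key : (fun k : ℕ => ((p.eval (k:ℚ) : ℚ) : ℝ)) =o[Filter.atTop]
      (fun k : ℕ => (2:ℝ)^k) := by
    have hterm : ∀ k : ℕ, ((p.eval (k:ℚ) : ℚ) : ℝ) =
        ∑ i ∈ Finset.range (p.natDegree + 1), ((p.coeff i : ℚ) : ℝ) * (k:ℝ)^i := by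
      intro k
      rw [Polynomial.eval_eq_sum_range]
      push_cast
      rfl
    have H : (fun k : ℕ => ∑ i ∈ Finset.range (p.natDegree+1),
        ((p.coeff i : ℚ):ℝ) * (k:ℝ)^i) =o[Filter.atTop] (fun k : ℕ => (2:ℝ)^k) := by
      apply Asymptotics.IsLittleO.fun_sum
      intro i _
      exact (isLittleO_pow_const_const_pow_of_one_lt i
        (by norm_num : (1:ℝ) < 2)).const_mul_left _
    exact H.congr' (Filter.Eventually.of_forall fun k => (hterm k).symm)
      (Filter.EventuallyEq.refl _ _)
  rw [Asymptotics.isLittleO_iff] at key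
  have h2 := key (show (0:ℝ) < 1/2 by norm_num)
  rw [Filter.eventually_atTop] at h2
  obtain ⟨N, hN⟩ := h2
  set k := max N 4 with hk
  have hk4 : 4 ≤ k := le_max_right _ _
  have hb := hN k (le_max_left _ _)
  have hval : (2:ℝ)^k ≤ ((p.eval (k:ℚ) : ℚ) : ℝ) := by exact_mod_cast hp k hk4
  have hpos : (0:ℝ) < 2^k := by positivity
  have hle : ((p.eval (k:ℚ):ℚ):ℝ) ≤ 1/2 * 2^k := by
    calc ((p.eval (k:ℚ):ℚ):ℝ) ≤ ‖((p.eval (k:ℚ):ℚ):ℝ)‖ := le_abs_self _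
      _ ≤ 1/2 * ‖(2:ℝ)^k‖ := hb
      _ = 1/2 * 2^k := by rw [Real.norm_eq_abs, abs_of_pos hpos]
  linarith

end NotChainAux

/-- Theorem, "only if" direction. If `S ⊆ |P₀|` is not a chain, i.e. contains
two incomparable elements, then for every choice of fixed values `mᵢ` for `xᵢ ∉ S`,
`L₊(P₀; m₁,…,m_{m₀})` as a function of the variables `mᵢ` with `xᵢ ∈ S` is not a polynomial
function: no polynomial in `card S` variables agrees with it at all tuples of nonnegative
integers. -/
theorem lexSum_linearizationCount_not_polynomial_of_not_chain (m₀ : ℕ)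
    (r0 : Fin m₀ → Fin m₀ → Prop) (hr0 : IsPartialOrder (Fin m₀) r0)
    (S : Finset (Fin m₀))
    (hS : ∃ i ∈ S, ∃ j ∈ S, i ≠ j ∧ ¬ r0 i j ∧ ¬ r0 j i) (m : Fin m₀ → ℕ) :
    ¬ ∃ f : MvPolynomial {i : Fin m₀ // i ∈ S} ℚ,
        ∀ v : {i : Fin m₀ // i ∈ S} → ℕ,
          (Lplus m₀ r0 (fun i => if h : i ∈ S then v ⟨i, h⟩ else m i) : ℚ) =
            MvPolynomial.eval (fun j => (v j : ℚ)) f := by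
  classical
  rintro ⟨f, hf⟩
  obtain ⟨i, hiS, j, hjS, hij, h1, h2⟩ := hS
  set g : {t : Fin m₀ // t ∈ S} → Polynomial ℚ :=
    fun t => if (t : Fin m₀) = i ∨ (t : Fin m₀) = j then Polynomial.X
      else Polynomial.C ((m (t : Fin m₀) : ℚ)) with hg
  apply NotChainAux.no_poly (MvPolynomial.aeval g f)
  intro n hn
  set v : {t : Fin m₀ // t ∈ S} → ℕ :=
    fun t => if (t : Fin m₀) = i ∨ (t : Fin m₀) = j then n else m (t : Fin m₀) with hv
  have hgv : ∀ t, (g t).eval (n:ℚ) = ((v t : ℕ) : ℚ) := by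
    intro t
    rw [hg, hv]
    by_cases hc : (t : Fin m₀) = i ∨ (t : Fin m₀) = j
    · simp [hc]
    · simp [hc]
  have hLb : 2^n ≤ Lplus m₀ r0 (fun t => if h : t ∈ S then v ⟨t, h⟩ else m t) := by
    refine le_trans (NotChainAux.two_pow_le_choose hn)
      (NotChainAux.choose_le_Lplus hr0 hij h1 h2 _ n ?_ ?_)
    · simp [hv, hiS]
    · simp [hv, hjS]
  rw [NotChainAux.eval_aeval,
    show (fun t => (g t).eval (n:ℚ)) = fun t => ((v t : ℕ):ℚ) from funext hgv, ← hf v]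
  exact_mod_cast hLb
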